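/- If X is a Hausdorff space, then |X| ≤ 2^{L(X)·wt(X)·ψ(X)}. -/

import Mathlib

open Cardinal Set TopologicalSpace

universe u

/-- The tightness `t(X)`: the least infinite cardinal `κ` such that whenever
`x ∈ closure A` there is `B ⊆ A` with `#B ≤ κ` and `x ∈ closure B`. -/
noncomputable def tightness (X : Type u) [TopologicalSpace X] : Cardinal.{u} :=
  sInf {κ : Cardinal.{u} | ℵ₀ ≤ κ ∧ ∀ (A : Set X) (x : X), x ∈ closure A →
    ∃ B ⊆ A, #B ≤ κ ∧ x ∈ closure B}

/-- The `κ`-closure of a set `A`. -/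
noncomputable def clk {X : Type u} [TopologicalSpace X] (κ : Cardinal.{u}) (A : Set X) : Set X :=
  ⋃ (B : Set X) (_ : B ⊆ A ∧ #B ≤ κ), closure B

/-- A cover `𝒞` witnessing that `wt X ≤ κ`. -/
noncomputable def IsWtWitness {X : Type u} [TopologicalSpace X] (κ : Cardinal.{u}) (𝒞 : Set (Set X)) : Prop :=
  ⋃₀ 𝒞 = Set.univ ∧ #𝒞 ≤ 2 ^ κ ∧ ∀ C ∈ 𝒞, tightness ↥C ≤ κ ∧ clk (2 ^ κ) C = Set.univ

/-- The weak tightness `wt(X)`. -/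
noncomputable def wt (X : Type u) [TopologicalSpace X] : Cardinal.{u} :=
  sInf {κ : Cardinal.{u} | ℵ₀ ≤ κ ∧ ∃ 𝒞 : Set (Set X), IsWtWitness κ 𝒞}

/-- The Lindelöf number `L(X)`. -/
noncomputable def LindelofNumber (X : Type u) [TopologicalSpace X] : Cardinal.{u} :=
  sInf {κ : Cardinal.{u} | ℵ₀ ≤ κ ∧ ∀ 𝒰 : Set (Set X), (∀ U ∈ 𝒰, IsOpen U) →
    ⋃₀ 𝒰 = Set.univ → ∃ 𝒱 ⊆ 𝒰, #𝒱 ≤ κ ∧ ⋃₀ 𝒱 = Set.univ}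

/-- The pseudocharacter `ψ(X)`. -/
noncomputable def psi (X : Type u) [TopologicalSpace X] : Cardinal.{u} :=
  sInf {κ : Cardinal.{u} | ℵ₀ ≤ κ ∧ ∀ x : X, ∃ 𝒰 : Set (Set X),
    #𝒰 ≤ κ ∧ (∀ U ∈ 𝒰, IsOpen U ∧ x ∈ U) ∧ ⋂₀ 𝒰 = {x}}

/-- The closed pseudocharacter `ψ_c(X)`. -/
noncomputable def psic (X : Type u) [TopologicalSpace X] : Cardinal.{u} :=
  sInf {κ : Cardinal.{u} | ℵ₀ ≤ κ ∧ ∀ x : X, ∃ 𝒰 : Set (Set X),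
    #𝒰 ≤ κ ∧ (∀ U ∈ 𝒰, IsOpen U ∧ x ∈ U) ∧ (⋂ U ∈ 𝒰, closure U) = {x}}

/-- `A` is `𝒞`-saturated: `A ∩ C` is dense in `A` for every `C ∈ 𝒞`. -/
noncomputable def Saturated {X : Type u} [TopologicalSpace X] (𝒞 : Set (Set X)) (A : Set X) : Prop :=
  ∀ C ∈ 𝒞, A ⊆ closure (A ∩ C)

/-- The π-character `πχ(x, X)` of a point: least cardinality of a local π-base at `x`. -/
noncomputable def piCharPt {X : Type u} [TopologicalSpace X] (x : X) : Cardinal.{u} :=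
  sInf {κ : Cardinal.{u} | ∃ ℬ : Set (Set X), #ℬ ≤ κ ∧
    (∀ B ∈ ℬ, IsOpen B ∧ B.Nonempty) ∧ ∀ U : Set X, IsOpen U → x ∈ U → ∃ B ∈ ℬ, B ⊆ U}

/-- The π-character `πχ(X)`. -/
noncomputable def piChar (X : Type u) [TopologicalSpace X] : Cardinal.{u} :=
  ⨆ x : X, piCharPt x

/-- The character `χ(x, X)` of a point: least cardinality of a local base at `x`. -/
noncomputable def charPt {X : Type u} [TopologicalSpace X] (x : X) : Cardinal.{u} :=
  sInf {κ : Cardinal.{u} | ∃ ℬ : Set (Set X), #ℬ ≤ κ ∧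
    (∀ B ∈ ℬ, IsOpen B ∧ x ∈ B) ∧ ∀ U : Set X, IsOpen U → x ∈ U → ∃ B ∈ ℬ, B ⊆ U}

/-- The character `χ(X)`. -/
noncomputable def character (X : Type u) [TopologicalSpace X] : Cardinal.{u} :=
  ⨆ x : X, charPt x

/-- The density `d(X)`: least cardinality of a dense subset. -/
noncomputable def density (X : Type u) [TopologicalSpace X] : Cardinal.{u} :=
  sInf {κ : Cardinal.{u} | ∃ D : Set X, Dense D ∧ #D ≤ κ}

/-- A space is homogeneous if its homeomorphism group acts transitively. -/
noncomputable def Homogeneous (X : Type u) [TopologicalSpace X] : Prop :=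
  ∀ x y : X, ∃ h : X ≃ₜ X, h x = y

/-- A space is power homogeneous if some (nonempty) power of it is homogeneous. -/
noncomputable def PowerHomogeneous (X : Type u) [TopologicalSpace X] : Prop :=
  ∃ I : Type u, Nonempty I ∧ Homogeneous (I → X)

/-- A `G^c_κ`-set: `G = ⋂𝒰 = ⋂_{U ∈ 𝒰} closure U` for a family `𝒰` of `≤ κ` open sets. -/
noncomputable def GcSet {X : Type u} [TopologicalSpace X] (κ : Cardinal.{u}) (G : Set X) : Prop :=
  ∃ 𝒰 : Set (Set X), #𝒰 ≤ κ ∧ (∀ U ∈ 𝒰, IsOpen U) ∧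
    G = ⋂₀ 𝒰 ∧ G = ⋂ U ∈ 𝒰, closure U

/-- A subset is subseparable if it is contained in the closure of a countable set. -/
noncomputable def Subseparable {X : Type u} [TopologicalSpace X] (A : Set X) : Prop :=
  ∃ c : Set X, c.Countable ∧ A ⊆ closure c
section Stmt3Aux

variable {X : Type u} [TopologicalSpace X]

lemma lindelofNumber_spec (X : Type u) [TopologicalSpace X] :
    ℵ₀ ≤ LindelofNumber X ∧ ∀ 𝒰 : Set (Set X), (∀ U ∈ 𝒰, IsOpen U) →
      ⋃₀ 𝒰 = Set.univ → ∃ 𝒱 ⊆ 𝒰, #𝒱 ≤ LindelofNumber X ∧ ⋃₀ 𝒱 = Set.univ := by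
  have h : LindelofNumber X ∈ {κ : Cardinal.{u} | ℵ₀ ≤ κ ∧ ∀ 𝒰 : Set (Set X), (∀ U ∈ 𝒰, IsOpen U) →
      ⋃₀ 𝒰 = Set.univ → ∃ 𝒱 ⊆ 𝒰, #𝒱 ≤ κ ∧ ⋃₀ 𝒱 = Set.univ} := by
    apply csInf_mem
    refine ⟨max ℵ₀ (2 ^ #X), ?_⟩
    simp only [Set.mem_setOf_eq]
    refine ⟨le_max_left _ _, fun 𝒰 h𝒰 hcov => ⟨𝒰, le_rfl, ?_, hcov⟩⟩
    refine le_trans (mk_set_le 𝒰) ?_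
    rw [Cardinal.mk_set]
    exact le_max_right _ _
  exact h

lemma psi_spec (X : Type u) [TopologicalSpace X] [T1Space X] :
    ℵ₀ ≤ psi X ∧ ∀ x : X, ∃ 𝒰 : Set (Set X),
      #𝒰 ≤ psi X ∧ (∀ U ∈ 𝒰, IsOpen U ∧ x ∈ U) ∧ ⋂₀ 𝒰 = {x} := by
  have h : psi X ∈ {κ : Cardinal.{u} | ℵ₀ ≤ κ ∧ ∀ x : X, ∃ 𝒰 : Set (Set X),
      #𝒰 ≤ κ ∧ (∀ U ∈ 𝒰, IsOpen U ∧ x ∈ U) ∧ ⋂₀ 𝒰 = {x}} := by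
    apply csInf_mem
    refine ⟨max ℵ₀ (2 ^ #X), ?_⟩
    simp only [Set.mem_setOf_eq]
    refine ⟨le_max_left _ _, fun x => ⟨{U | IsOpen U ∧ x ∈ U}, ?_, fun U hU => hU, ?_⟩⟩
    · refine le_trans (mk_set_le _) ?_
      rw [Cardinal.mk_set]
      exact le_max_right _ _
    · apply Set.Subset.antisymm
      · intro y hy
        by_contra hyx
        have h1 : y ∉ ({y}ᶜ : Set X) := by simp
        exact h1 (hy ({y}ᶜ) ⟨isOpen_compl_singleton, by simp; rintro rfl; exact hyx rfl⟩)
      · rintro y rfl U hU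
        exact hU.2
  exact h

lemma tightness_spec (Y : Type u) [TopologicalSpace Y] :
    ℵ₀ ≤ tightness Y ∧ ∀ (A : Set Y) (x : Y), x ∈ closure A →
      ∃ B ⊆ A, #B ≤ tightness Y ∧ x ∈ closure B := by
  have h : tightness Y ∈ {κ : Cardinal.{u} | ℵ₀ ≤ κ ∧ ∀ (A : Set Y) (x : Y), x ∈ closure A →
      ∃ B ⊆ A, #B ≤ κ ∧ x ∈ closure B} := by
    apply csInf_mem
    refine ⟨max ℵ₀ #Y, ?_⟩
    simp only [Set.mem_setOf_eq]
    refine ⟨le_max_left _ _, fun A x hx =>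
      ⟨A, Set.Subset.rfl, le_trans (mk_set_le A) (le_max_right _ _), hx⟩⟩
  exact h

lemma wt_spec (X : Type u) [TopologicalSpace X] :
    ℵ₀ ≤ wt X ∧ ∃ 𝒞 : Set (Set X), IsWtWitness (wt X) 𝒞 := by
  have h : wt X ∈ {κ : Cardinal.{u} | ℵ₀ ≤ κ ∧ ∃ 𝒞 : Set (Set X), IsWtWitness κ 𝒞} := by
    apply csInf_mem
    refine ⟨max ℵ₀ #X, ?_⟩
    simp only [Set.mem_setOf_eq]
    refine ⟨le_max_left _ _, {Set.univ}, ?_, ?_, ?_⟩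
    · simp
    · have h1 : #({Set.univ} : Set (Set X)) = 1 := by simp
      rw [h1]
      refine le_trans ?_ (le_of_lt (cantor _))
      exact le_trans (le_of_lt Cardinal.one_lt_aleph0) (le_max_left _ _)
    · rintro C hC
      rw [Set.mem_singleton_iff] at hC
      subst hC
      constructor
      · apply csInf_le'
        simp only [Set.mem_setOf_eq]
        refine ⟨le_max_left _ _, fun A x hx => ⟨A, Set.Subset.rfl, ?_, hx⟩⟩
        refine le_trans (mk_set_le A) ?_
        refine le_trans ?_ (le_max_right ℵ₀ #X)
        rw [Cardinal.mk_univ]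
      · apply Set.Subset.antisymm (Set.subset_univ _)
        intro x _
        apply Set.mem_iUnion.2
        refine ⟨{x}, Set.mem_iUnion.2 ⟨⟨Set.subset_univ _, ?_⟩, subset_closure rfl⟩⟩
        simp only [Cardinal.mk_singleton]
        exact le_trans (le_of_lt Cardinal.one_lt_aleph0) (le_trans (le_max_left _ _) (le_of_lt (cantor _)))
  exact h

end Stmt3Aux
section Stmt3Aux2

variable {X : Type u} [TopologicalSpace X]

lemma mem_closure_inter_of_isOpen {y : X} {B W : Set X} (hW : IsOpen W) (hyW : y ∈ W)
    (hyB : y ∈ closure B) : y ∈ closure (B ∩ W) := by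
  rw [mem_closure_iff] at hyB ⊢
  intro o ho hyo
  obtain ⟨z, hz1, hz2⟩ := hyB (o ∩ W) (ho.inter hW) ⟨hyo, hyW⟩
  exact ⟨z, hz1.1, hz2, hz1.2⟩

/-- Šapirovskii-type lemma: with a `ψ_c`-family of size `≤ κ`, closures of `≤ κ`-sized
sets have size at most `2 ^ κ`. -/
lemma card_closure_le_of_psic {κ : Cardinal.{u}} (hκ : ℵ₀ ≤ κ)
    (V : X → Set (Set X)) (hVcard : ∀ x, #(V x) ≤ κ)
    (hVopen : ∀ x, ∀ U ∈ V x, IsOpen U ∧ x ∈ U)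
    (hVsep : ∀ x, (⋂ U ∈ V x, closure U) = {x})
    (B : Set X) (hB : #B ≤ κ) : #(closure B) ≤ 2 ^ κ := by
  classical
  set f : closure B → {t : Set (Set X) // t ⊆ 𝒫 B ∧ #t ≤ κ} := fun x =>
    ⟨(fun U => B ∩ U) '' (V x.1), by
      rintro D ⟨U, _, rfl⟩
      exact Set.inter_subset_left, le_trans mk_image_le (hVcard x.1)⟩ with hf
  have hinj : Function.Injective f := by
    rintro ⟨x, hx⟩ ⟨y, hy⟩ hxy
    by_contra hne
    have hne' : y ≠ x := fun h => hne (by simpa [h])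
    -- pick U ∈ V x with y ∉ closure U
    have : y ∉ ⋂ U ∈ V x, closure U := by
      rw [hVsep x]
      exact hne'
    simp only [Set.mem_iInter, not_forall] at this
    obtain ⟨U, hU, hyU⟩ := this
    -- B ∩ U ∈ f y
    have hmem : B ∩ U ∈ (fun U => B ∩ U) '' (V y) := by
      have : B ∩ U ∈ (fun U => B ∩ U) '' (V x) := ⟨U, hU, rfl⟩
      have h2 := congrArg Subtype.val hxy
      simp only [hf] at h2
      rwa [h2] at this
    obtain ⟨W, hW, hBW⟩ := hmem
    have hyW : y ∈ W := (hVopen y W hW).2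
    have hycl : y ∈ closure (B ∩ W) :=
      mem_closure_inter_of_isOpen (hVopen y W hW).1 hyW hy
    simp only [] at hBW
    rw [show B ∩ W = B ∩ U from hBW] at hycl
    exact hyU (closure_mono Set.inter_subset_right hycl)
  have hcard := Cardinal.mk_le_of_injective hinj
  refine le_trans hcard (le_trans (Cardinal.mk_bounded_subset_le _ κ) ?_)
  rw [Cardinal.mk_powerset]
  have h1 : ((2 : Cardinal.{u}) ^ #B ⊔ ℵ₀) ^ κ ≤ 2 ^ κ := by
    have hmax : (2 : Cardinal.{u}) ^ #B ⊔ ℵ₀ ≤ 2 ^ κ :=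
      max_le (Cardinal.power_le_power_left (by norm_num) hB) (le_trans hκ (cantor κ).le)
    refine le_trans (Cardinal.power_le_power_right hmax) ?_
    rw [← Cardinal.power_mul, Cardinal.mul_eq_self hκ]
  exact h1

end Stmt3Aux2
section Stmt3Aux3

variable {X : Type u} [TopologicalSpace X]

/-- In a Hausdorff space with Lindelöf number at most `κ`, from a `ψ`-family one builds a
`ψ_c`-family of size at most `κ`. -/
lemma exists_psic_fam [T2Space X] {κ : Cardinal.{u}} (hκ : ℵ₀ ≤ κ)
    (hL : ∀ 𝒰 : Set (Set X), (∀ U ∈ 𝒰, IsOpen U) → ⋃₀ 𝒰 = Set.univ →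
      ∃ 𝒱 ⊆ 𝒰, #𝒱 ≤ κ ∧ ⋃₀ 𝒱 = Set.univ)
    (hψ : ∀ x : X, ∃ 𝒰 : Set (Set X), #𝒰 ≤ κ ∧ (∀ U ∈ 𝒰, IsOpen U ∧ x ∈ U) ∧ ⋂₀ 𝒰 = {x}) :
    ∃ V : X → Set (Set X), ∀ x, #(V x) ≤ κ ∧ (∀ U ∈ V x, IsOpen U ∧ x ∈ U) ∧
      (⋂ U ∈ V x, closure U) = {x} := by
  classical
  have hsep : ∀ x y : X, ∃ p : Set X × Set X, x ≠ y →
      IsOpen p.1 ∧ IsOpen p.2 ∧ x ∈ p.1 ∧ y ∈ p.2 ∧ Disjoint p.1 p.2 := by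
    intro x y
    by_cases h : x ≠ y
    · obtain ⟨w, v, hw, hv, hxw, hyv, hd⟩ := t2_separation h
      exact ⟨(w, v), fun _ => ⟨hw, hv, hxw, hyv, hd⟩⟩
    · exact ⟨(Set.univ, Set.univ), fun h' => absurd h' h⟩
  choose sep hsep' using hsep
  choose 𝒰 h𝒰card h𝒰mem h𝒰int using hψ
  set F : X → Set X → Set (Set X) := fun x U =>
    if hcov : ∃ 𝒱, 𝒱 ⊆ insert U ((fun y => (sep x y).2) '' Uᶜ) ∧ #𝒱 ≤ κ ∧ ⋃₀ 𝒱 = Set.univ then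
      Set.range (fun S : ↥hcov.choose =>
        if h : ∃ y, y ∉ U ∧ (sep x y).2 = S.1 then (sep x h.choose).1 else Set.univ)
    else ∅ with hF
  have hFcard : ∀ x U, #(F x U) ≤ κ := by
    intro x U
    rw [hF]
    dsimp only
    split
    · next hcov => exact le_trans Cardinal.mk_range_le hcov.choose_spec.2.1
    · simp
  have hFprop : ∀ x U, U ∈ 𝒰 x → ∀ W ∈ F x U, IsOpen W ∧ x ∈ W := by
    intro x U hU W hW
    rw [hF] at hW
    dsimp only at hW
    by_cases hcov : ∃ 𝒱, 𝒱 ⊆ insert U ((fun y => (sep x y).2) '' Uᶜ) ∧ #𝒱 ≤ κ ∧ ⋃₀ 𝒱 = Set.univ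
    · rw [dif_pos hcov] at hW
      obtain ⟨S, rfl⟩ := hW
      show IsOpen (if h : ∃ y, y ∉ U ∧ (sep x y).2 = S.1 then (sep x h.choose).1 else Set.univ) ∧
        x ∈ (if h : ∃ y, y ∉ U ∧ (sep x y).2 = S.1 then (sep x h.choose).1 else Set.univ)
      by_cases h : ∃ y, y ∉ U ∧ (sep x y).2 = S.1
      · rw [dif_pos h]
        have hy := h.choose_spec
        have hne : x ≠ h.choose := fun he => hy.1 (he ▸ (h𝒰mem x U hU).2)
        obtain ⟨ho1, _, hx1, _, _⟩ := hsep' x h.choose hne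
        exact ⟨ho1, hx1⟩
      · rw [dif_neg h]
        exact ⟨isOpen_univ, Set.mem_univ x⟩
    · rw [dif_neg hcov] at hW
      exact absurd hW (Set.notMem_empty W)
  -- key separation property
  have hFkey : ∀ x U, U ∈ 𝒰 x → ∀ z, z ∉ U → z ∈ (⋂ W ∈ F x U, closure W) → False := by
    intro x U hU z hzU hz
    have hxU : x ∈ U := (h𝒰mem x U hU).2
    have hopen : ∀ W ∈ insert U ((fun y => (sep x y).2) '' Uᶜ), IsOpen W := by
      rintro W hW
      rcases Set.mem_insert_iff.1 hW with rfl | ⟨y, hy, rfl⟩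
      · exact (h𝒰mem x W hU).1
      · have hne : x ≠ y := fun he => hy (he ▸ hxU)
        exact (hsep' x y hne).2.1
    have hcovall : ⋃₀ insert U ((fun y => (sep x y).2) '' Uᶜ) = Set.univ := by
      apply Set.eq_univ_of_forall
      intro w
      by_cases hw : w ∈ U
      · exact ⟨U, Set.mem_insert _ _, hw⟩
      · have hne : x ≠ w := fun he => hw (he ▸ hxU)
        exact ⟨(sep x w).2, Set.mem_insert_iff.2 (Or.inr ⟨w, hw, rfl⟩),
          (hsep' x w hne).2.2.2.1⟩
    have hcov : ∃ 𝒱, 𝒱 ⊆ insert U ((fun y => (sep x y).2) '' Uᶜ) ∧ #𝒱 ≤ κ ∧ ⋃₀ 𝒱 = Set.univ := by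
      obtain ⟨𝒱, h1, h2, h3⟩ := hL (insert U ((fun y => (sep x y).2) '' Uᶜ)) hopen hcovall
      exact ⟨𝒱, h1, h2, h3⟩
    obtain ⟨hsub, hcard0, hunion⟩ := hcov.choose_spec
    have hz' : z ∈ ⋃₀ hcov.choose := by rw [hunion]; exact Set.mem_univ z
    obtain ⟨S, hS, hzS⟩ := hz'
    have hSex : ∃ y, y ∉ U ∧ (sep x y).2 = S := by
      rcases Set.mem_insert_iff.1 (hsub hS) with rfl | ⟨y, hy, hy2⟩
      · exact absurd hzS hzU
      · exact ⟨y, hy, hy2⟩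
    obtain ⟨hy₀U, hy₀S⟩ := hSex.choose_spec
    have hne : x ≠ hSex.choose := fun he => hy₀U (he ▸ hxU)
    obtain ⟨ho1, ho2, hx1, hy2, hdisj⟩ := hsep' x hSex.choose hne
    -- the member of F x U corresponding to S
    have hmem : (sep x hSex.choose).1 ∈ F x U := by
      rw [hF]
      dsimp only
      rw [dif_pos hcov]
      refine ⟨⟨S, hS⟩, ?_⟩
      show (if h : ∃ y, y ∉ U ∧ (sep x y).2 = S then (sep x h.choose).1 else Set.univ)
        = (sep x hSex.choose).1
      rw [dif_pos hSex]
    have hzcl : z ∈ closure (sep x hSex.choose).1 := by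
      have h1 := Set.mem_iInter.1 hz (sep x hSex.choose).1
      exact Set.mem_iInter.1 h1 hmem
    have hclsub : closure (sep x hSex.choose).1 ⊆ ((sep x hSex.choose).2)ᶜ := by
      apply closure_minimal
      · intro w hw hw2
        exact Set.disjoint_left.1 hdisj hw hw2
      · exact isClosed_compl_iff.2 ho2
    exact (hclsub hzcl) (by rw [hy₀S]; exact hzS)
  refine ⟨fun x => 𝒰 x ∪ ⋃ U ∈ 𝒰 x, F x U, fun x => ⟨?_, ?_, ?_⟩⟩
  · refine le_trans (Cardinal.mk_union_le _ _) ?_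
    have h2 : #(⋃ U ∈ 𝒰 x, F x U) ≤ κ := by
      rw [Set.biUnion_eq_iUnion]
      refine le_trans Cardinal.mk_iUnion_le_sum_mk ?_
      refine le_trans (Cardinal.sum_le_sum _ (fun _ => κ) (fun U => hFcard x U.1)) ?_
      rw [Cardinal.sum_const']
      refine le_trans (mul_le_mul' (h𝒰card x) le_rfl) ?_
      rw [Cardinal.mul_eq_self hκ]
    refine le_trans (add_le_add (h𝒰card x) h2) ?_
    rw [Cardinal.add_eq_self hκ]
  · rintro W (hW | hW)
    · exact h𝒰mem x W hW
    · obtain ⟨U, hU', hWU'⟩ := Set.mem_iUnion₂.1 hW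
      exact hFprop x U hU' W hWU'
  · apply Set.Subset.antisymm
    · intro z hz
      by_contra hzx
      have hzx' : z ∉ ({x} : Set X) := hzx
      -- find U ∈ 𝒰 x with z ∉ U
      have h0 : z ∉ ⋂₀ 𝒰 x := by rw [h𝒰int x]; exact hzx'
      have hex : ∃ U ∈ 𝒰 x, z ∉ U := by
        by_contra hc
        push_neg at hc
        exact h0 (fun U hU => hc U hU)
      obtain ⟨U, hU, hzU⟩ := hex
      apply hFkey x U hU z hzU
      apply Set.mem_iInter.2
      intro W
      apply Set.mem_iInter.2
      intro hW
      have hWV : W ∈ 𝒰 x ∪ ⋃ U ∈ 𝒰 x, F x U :=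
        Or.inr (Set.mem_iUnion.2 ⟨U, Set.mem_iUnion.2 ⟨hU, hW⟩⟩)
      have := Set.mem_iInter.1 hz W
      exact Set.mem_iInter.1 this hWV
    · rintro z rfl
      apply Set.mem_iInter.2
      intro W
      apply Set.mem_iInter.2
      intro hW
      rcases hW with hW | hW
      · exact subset_closure (h𝒰mem z W hW).2
      · obtain ⟨U, hU', hWU'⟩ := Set.mem_iUnion₂.1 hW
        exact subset_closure (hFprop z U hU' W hWU').2

end Stmt3Aux3
section Stmt3Aux4

variable {X : Type u} [TopologicalSpace X]

/-- Transfinite iteration of an operator `G` on subsets of `X`. -/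
noncomputable def stmt3chain {X : Type u} (G : Set X → Set X) : Ordinal.{u} → Set X :=
  Ordinal.lt_wf.fix (fun o ih => G (⋃ o' : Set.Iio o, ih o'.1 o'.2))

lemma stmt3chain_eq {X : Type u} (G : Set X → Set X) (o : Ordinal.{u}) :
    stmt3chain G o = G (⋃ o' : Set.Iio o, stmt3chain G o'.1) := by
  rw [stmt3chain, WellFounded.fix_eq]

lemma stmt3chain_mono {X : Type u} (G : Set X → Set X) (hinfl : ∀ A, A ⊆ G A)
    {o₁ o₂ : Ordinal.{u}} (h : o₁ ≤ o₂) : stmt3chain G o₁ ⊆ stmt3chain G o₂ := by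
  rcases eq_or_lt_of_le h with rfl | hlt
  · exact Set.Subset.rfl
  · rw [stmt3chain_eq G o₂]
    refine Set.Subset.trans ?_ (hinfl _)
    exact Set.subset_iUnion (fun o' : Set.Iio o₂ => stmt3chain G o'.1) ⟨o₁, hlt⟩

/-- Reindex a union over `Iio o` by `o.toType`. -/
lemma iUnion_Iio_eq_toType {α : Type u} (f : Ordinal.{u} → Set α) (o : Ordinal.{u}) :
    (⋃ o' : Set.Iio o, f o'.1) = ⋃ i : o.ToType, f ((Ordinal.ToType.mk (o := o)).symm i).1 := by
  ext x
  simp only [Set.mem_iUnion]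
  constructor
  · rintro ⟨o', hx⟩
    refine ⟨Ordinal.ToType.mk (o := o) o', ?_⟩
    rwa [OrderIso.symm_apply_apply]
  · rintro ⟨i, hx⟩
    exact ⟨(Ordinal.ToType.mk (o := o)).symm i, hx⟩

lemma mk_iUnion_le_of_le {α ι : Type u} {f : ι → Set α} {c : Cardinal.{u}} (hc : ℵ₀ ≤ c)
    (hι : #ι ≤ c) (hf : ∀ i, #(f i) ≤ c) : #(⋃ i, f i) ≤ c := by
  refine le_trans Cardinal.mk_iUnion_le_sum_mk ?_
  refine le_trans (Cardinal.sum_le_sum _ (fun _ => c) hf) ?_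
  rw [Cardinal.sum_const']
  exact le_trans (mul_le_mul' hι le_rfl) (le_of_eq (Cardinal.mul_eq_self hc))

lemma mem_clk {κ : Cardinal.{u}} {A : Set X} {y : X} :
    y ∈ clk κ A ↔ ∃ B : Set X, (B ⊆ A ∧ #B ≤ κ) ∧ y ∈ closure B := by
  simp [clk]

lemma clk_eq_iUnion (κ : Cardinal.{u}) (A : Set X) :
    clk κ A = ⋃ i : {B : Set X // B ⊆ A ∧ #B ≤ κ}, closure i.1 := by
  ext y
  simp only [mem_clk, Set.mem_iUnion]
  constructor
  · rintro ⟨B, hB, hy⟩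
    exact ⟨⟨B, hB⟩, hy⟩
  · rintro ⟨⟨B, hB⟩, hy⟩
    exact ⟨B, hB, hy⟩

lemma clk_mono {κ : Cardinal.{u}} {A A' : Set X} (h : A ⊆ A') : clk κ A ⊆ clk κ A' := by
  intro y hy
  rw [mem_clk] at hy ⊢
  obtain ⟨B, ⟨h1, h2⟩, h3⟩ := hy
  exact ⟨B, ⟨h1.trans h, h2⟩, h3⟩

lemma clk_mono_card {κ κ' : Cardinal.{u}} {A : Set X} (h : κ ≤ κ') : clk κ A ⊆ clk κ' A := by
  intro y hy
  rw [mem_clk] at hy ⊢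
  obtain ⟨B, ⟨h1, h2⟩, h3⟩ := hy
  exact ⟨B, ⟨h1, h2.trans h⟩, h3⟩

/-- Cardinality bound for `clk κ A`. -/
lemma card_clk_le {κ : Cardinal.{u}} (hκ : ℵ₀ ≤ κ) {A : Set X} (hA : #A ≤ 2 ^ κ)
    (hSap : ∀ B : Set X, #B ≤ κ → #(closure B) ≤ 2 ^ κ) : #(clk κ A) ≤ 2 ^ κ := by
  rw [clk_eq_iUnion]
  have h2κ : ℵ₀ ≤ 2 ^ κ := le_trans hκ (cantor κ).le
  refine mk_iUnion_le_of_le h2κ ?_ (fun i => hSap i.1 i.2.2)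
  refine le_trans (Cardinal.mk_bounded_subset_le A κ) ?_
  have hmax : #A ⊔ ℵ₀ ≤ 2 ^ κ := max_le hA h2κ
  refine le_trans (Cardinal.power_le_power_right hmax) ?_
  rw [← Cardinal.power_mul, Cardinal.mul_eq_self hκ]

end Stmt3Aux4
/-- Theorem 2.8. -/
theorem stmt3 {X : Type u} [TopologicalSpace X] [T2Space X] :
    #X ≤ 2 ^ (LindelofNumber X * wt X * psi X) := by
  classical
  by_cases hXe : IsEmpty X
  · rw [Cardinal.mk_eq_zero X]
    exact zero_le'
  have hXne : Nonempty X := not_isEmpty_iff.mp hXe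
  set κ := LindelofNumber X * wt X * psi X with hκdef
  obtain ⟨hLinf, hLspec⟩ := lindelofNumber_spec X
  obtain ⟨hψinf, hψspec⟩ := psi_spec X
  obtain ⟨hwtinf, 𝒞, h𝒞cov, h𝒞card, h𝒞props⟩ := wt_spec X
  have hone : ∀ c : Cardinal.{u}, ℵ₀ ≤ c → 1 ≤ c :=
    fun c hc => le_trans (le_of_lt Cardinal.one_lt_aleph0) hc
  have hLκ : LindelofNumber X ≤ κ := by
    rw [hκdef]
    exact le_trans (le_mul_of_one_le_right zero_le' (hone _ hwtinf))
      (le_mul_of_one_le_right zero_le' (hone _ hψinf))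
  have hwtκ : wt X ≤ κ := by
    rw [hκdef]
    exact le_trans (le_mul_of_one_le_left zero_le' (hone _ hLinf))
      (le_mul_of_one_le_right zero_le' (hone _ hψinf))
  have hψκ : psi X ≤ κ := by
    rw [hκdef]
    exact le_mul_of_one_le_left zero_le'
      (le_trans (hone _ hLinf) (le_mul_of_one_le_right zero_le' (hone _ hwtinf)))
  have hκinf : ℵ₀ ≤ κ := le_trans hLinf hLκ
  have h2κinf : ℵ₀ ≤ 2 ^ κ := le_trans hκinf (cantor κ).le
  have hκ2κ : κ ≤ 2 ^ κ := (cantor κ).le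
  -- strengthened specs
  have hL' : ∀ 𝒰 : Set (Set X), (∀ U ∈ 𝒰, IsOpen U) → ⋃₀ 𝒰 = Set.univ →
      ∃ 𝒱 ⊆ 𝒰, #𝒱 ≤ κ ∧ ⋃₀ 𝒱 = Set.univ := by
    intro 𝒰 h1 h2
    obtain ⟨𝒱, hv1, hv2, hv3⟩ := hLspec 𝒰 h1 h2
    exact ⟨𝒱, hv1, hv2.trans hLκ, hv3⟩
  have hψ' : ∀ x : X, ∃ 𝒰 : Set (Set X), #𝒰 ≤ κ ∧ (∀ U ∈ 𝒰, IsOpen U ∧ x ∈ U) ∧ ⋂₀ 𝒰 = {x} := by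
    intro x
    obtain ⟨𝒰, h1, h2, h3⟩ := hψspec x
    exact ⟨𝒰, h1.trans hψκ, h2, h3⟩
  obtain ⟨V, hV⟩ := exists_psic_fam hκinf hL' hψ'
  have hVcard : ∀ x, #(V x) ≤ κ := fun x => (hV x).1
  have hVopen : ∀ x, ∀ U ∈ V x, IsOpen U ∧ x ∈ U := fun x => (hV x).2.1
  have hVsep : ∀ x, (⋂ U ∈ V x, closure U) = {x} := fun x => (hV x).2.2
  have hSap : ∀ B : Set X, #B ≤ κ → #(closure B) ≤ 2 ^ κ :=
    card_closure_le_of_psic hκinf V hVcard hVopen hVsep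
  -- tightness of members of 𝒞
  have htight : ∀ C ∈ 𝒞, ∀ (A : Set ↥C) (y : ↥C), y ∈ closure A →
      ∃ B ⊆ A, #B ≤ κ ∧ y ∈ closure B := by
    intro C hC A y hy
    obtain ⟨B, h1, h2, h3⟩ := (tightness_spec ↥C).2 A y hy
    exact ⟨B, h1, h2.trans ((h𝒞props C hC).1.trans hwtκ), h3⟩
  -- saturation points
  have hbex : ∀ (x : X) (C : ↥𝒞), ∃ B : Set X, B ⊆ C.1 ∧ #B ≤ 2 ^ κ ∧ x ∈ closure B := by
    intro x C
    have h1 := (h𝒞props C.1 C.2).2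
    have h2 : x ∈ clk (2 ^ wt X) C.1 := by rw [h1]; trivial
    rw [mem_clk] at h2
    obtain ⟨B, ⟨hb1, hb2⟩, hb3⟩ := h2
    exact ⟨B, hb1, hb2.trans (Cardinal.power_le_power_left (by norm_num) hwtκ), hb3⟩
  choose b hb1 hb2 hb3 using hbex
  -- the escape-point choice function
  set q : Set (Set X) → X := fun 𝒱 =>
    if h : ∃ z, z ∉ ⋃ W ∈ 𝒱, closure W then h.choose else Classical.arbitrary X with hq
  have hqspec : ∀ 𝒱 : Set (Set X), (∃ z, z ∉ ⋃ W ∈ 𝒱, closure W) →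
      q 𝒱 ∉ ⋃ W ∈ 𝒱, closure W := by
    intro 𝒱 h
    rw [hq]
    dsimp only
    rw [dif_pos h]
    exact h.choose_spec
  -- families
  set Fam : Set X → Set (Set (Set X)) := fun A =>
    {𝒱 | (∀ W ∈ 𝒱, ∃ y ∈ clk κ A, W ∈ V y) ∧ #𝒱 ≤ κ ∧ ∃ z, z ∉ ⋃ W ∈ 𝒱, closure W} with hFam
  have hFamMono : ∀ {A A' : Set X}, A ⊆ A' → Fam A ⊆ Fam A' := by
    intro A A' hAA' 𝒱 h𝒱
    obtain ⟨h1, h2, h3⟩ := h𝒱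
    refine ⟨fun W hW => ?_, h2, h3⟩
    obtain ⟨y, hy1, hy2⟩ := h1 W hW
    exact ⟨y, clk_mono hAA' hy1, hy2⟩
  -- the operator
  set G : Set X → Set X := fun A =>
    (A ∪ ⋃ p : ↥A × ↥𝒞, b p.1.1 p.2) ∪ (q '' Fam A) with hG
  have hGinfl : ∀ A : Set X, A ⊆ G A := fun A =>
    Set.Subset.trans Set.subset_union_left Set.subset_union_left
  set ch : Ordinal.{u} → Set X := stmt3chain G with hch
  set Λ : Ordinal.{u} := (Order.succ κ).ord with hΛ
  have hΛlim : Order.IsSuccLimit Λ := Cardinal.isSuccLimit_ord (hκinf.trans (Order.le_succ κ))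
  set H : Set X := ⋃ o' : Set.Iio Λ, ch o'.1 with hH
  have hchmono : ∀ {o₁ o₂ : Ordinal.{u}}, o₁ ≤ o₂ → ch o₁ ⊆ ch o₂ :=
    fun h => stmt3chain_mono G hGinfl h
  have hchH : ∀ {o : Ordinal.{u}}, o < Λ → ch o ⊆ H := by
    intro o ho
    exact Set.subset_iUnion (fun o' : Set.Iio Λ => ch o'.1) ⟨o, ho⟩
  -- cardinality of G
  have h𝒞card2 : #𝒞 ≤ 2 ^ κ :=
    h𝒞card.trans (Cardinal.power_le_power_left (by norm_num) hwtκ)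
  have hGcard : ∀ A : Set X, #A ≤ 2 ^ κ → #(G A) ≤ 2 ^ κ := by
    intro A hA
    rw [hG]
    dsimp only
    refine le_trans (Cardinal.mk_union_le _ _) ?_
    have h1 : #(A ∪ ⋃ p : ↥A × ↥𝒞, b p.1.1 p.2 : Set X) ≤ 2 ^ κ := by
      refine le_trans (Cardinal.mk_union_le _ _) ?_
      have hpairs : #(⋃ p : ↥A × ↥𝒞, b p.1.1 p.2) ≤ 2 ^ κ := by
        refine mk_iUnion_le_of_le h2κinf ?_ (fun p => hb2 p.1.1 p.2)
        rw [Cardinal.mk_prod, Cardinal.lift_id, Cardinal.lift_id]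
        exact le_trans (mul_le_mul' hA h𝒞card2) (le_of_eq (Cardinal.mul_eq_self h2κinf))
      exact le_trans (add_le_add hA hpairs) (le_of_eq (Cardinal.add_eq_self h2κinf))
    have h2 : #(q '' Fam A) ≤ 2 ^ κ := by
      refine le_trans Cardinal.mk_image_le ?_
      have hWA : #({W : Set X | ∃ y ∈ clk κ A, W ∈ V y}) ≤ 2 ^ κ := by
        have heq : {W : Set X | ∃ y ∈ clk κ A, W ∈ V y} = ⋃ y : ↥(clk κ A), V y.1 := by
          ext W
          simp only [Set.mem_setOf_eq, Set.mem_iUnion]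
          constructor
          · rintro ⟨y, hy1, hy2⟩; exact ⟨⟨y, hy1⟩, hy2⟩
          · rintro ⟨⟨y, hy1⟩, hy2⟩; exact ⟨y, hy1, hy2⟩
        rw [heq]
        exact mk_iUnion_le_of_le h2κinf (card_clk_le hκinf hA hSap)
          (fun y => (hVcard y.1).trans hκ2κ)
      have hsub : Fam A ⊆ {𝒱 : Set (Set X) |
          𝒱 ⊆ {W : Set X | ∃ y ∈ clk κ A, W ∈ V y} ∧ #𝒱 ≤ κ} := by
        rintro 𝒱 ⟨hh1, hh2, _⟩
        exact ⟨fun W hW => hh1 W hW, hh2⟩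
      refine le_trans (mk_le_mk_of_subset hsub) ?_
      refine le_trans (Cardinal.mk_bounded_subset_le _ κ) ?_
      have hmax : #({W : Set X | ∃ y ∈ clk κ A, W ∈ V y}) ⊔ ℵ₀ ≤ 2 ^ κ := max_le hWA h2κinf
      refine le_trans (Cardinal.power_le_power_right hmax) ?_
      rw [← Cardinal.power_mul, Cardinal.mul_eq_self hκinf]
    exact le_trans (add_le_add h1 h2) (le_of_eq (Cardinal.add_eq_self h2κinf))
  -- cardinality of the chain
  have hchcard : ∀ o : Ordinal.{u}, o < Λ → #(ch o) ≤ 2 ^ κ := by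
    intro o
    induction o using Ordinal.induction with
    | _ o IH =>
      intro ho
      have he : ch o = G (⋃ o' : Set.Iio o, ch o'.1) := stmt3chain_eq G o
      rw [he]
      apply hGcard
      rw [iUnion_Iio_eq_toType (fun o' => ch o') o]
      refine mk_iUnion_le_of_le h2κinf ?_ ?_
      · rw [Cardinal.mk_toType]
        have : o.card < Order.succ κ := by
          rw [hΛ] at ho
          exact Cardinal.lt_ord.1 ho
        exact le_trans (Order.lt_succ_iff.1 this) hκ2κ
      · intro i
        have hio : (((Ordinal.ToType.mk (o := o)).symm i) : Ordinal.{u}) < o :=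
          ((Ordinal.ToType.mk (o := o)).symm i).2
        exact IH _ hio (hio.trans ho)
  have hHcard : #H ≤ 2 ^ κ := by
    rw [hH, iUnion_Iio_eq_toType (fun o' => ch o') Λ]
    refine mk_iUnion_le_of_le h2κinf ?_ ?_
    · rw [Cardinal.mk_toType, hΛ, Cardinal.card_ord]
      exact Order.succ_le_of_lt (cantor κ)
    · intro i
      exact hchcard _ (((Ordinal.ToType.mk (o := Λ)).symm i).2)
  -- bounded subsets of H live in a single stage
  have hbound : ∀ B : Set X, B ⊆ H → #B ≤ κ → ∃ o : Ordinal.{u}, o < Λ ∧ B ⊆ ch o := by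
    intro B hBH hBκ
    have hex : ∀ y : ↥B, ∃ o : Ordinal.{u}, o < Λ ∧ y.1 ∈ ch o := by
      intro y
      have hy := hBH y.2
      rw [hH] at hy
      obtain ⟨o', hy'⟩ := Set.mem_iUnion.1 hy
      exact ⟨o'.1, o'.2, hy'⟩
    choose f hf1 hf2 using hex
    refine ⟨iSup f, ?_, ?_⟩
    · have hcof : #↥B < Λ.cof := by
        rw [hΛ, (Cardinal.isRegular_succ hκinf).cof_eq]
        exact lt_of_le_of_lt hBκ (Order.lt_succ κ)
      exact Ordinal.iSup_lt_ord hcof hf1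
    · intro y hy
      exact hchmono (Ordinal.le_iSup f ⟨y, hy⟩) (hf2 ⟨y, hy⟩)
  -- H is 𝒞-saturated
  have hsat : ∀ C ∈ 𝒞, H ⊆ closure (H ∩ C) := by
    intro C hC x hx
    rw [hH] at hx
    obtain ⟨o', hxo⟩ := Set.mem_iUnion.1 hx
    have hsucc : Order.succ o'.1 < Λ := hΛlim.succ_lt o'.2
    have hxin : x ∈ ⋃ o'' : Set.Iio (Order.succ o'.1), ch o''.1 :=
      Set.mem_iUnion.2 ⟨⟨o'.1, Set.mem_Iio.2 (Order.lt_succ _)⟩, hxo⟩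
    have hbsub : b x ⟨C, hC⟩ ⊆ ch (Order.succ o'.1) := by
      have he : ch (Order.succ o'.1) = G (⋃ o'' : Set.Iio (Order.succ o'.1), ch o''.1) :=
        stmt3chain_eq G _
      rw [he, hG]
      intro w hw
      exact Set.mem_union_left _ (Set.mem_union_right _
        (Set.mem_iUnion.2 ⟨(⟨x, hxin⟩, ⟨C, hC⟩), hw⟩))
    have hsub' : b x ⟨C, hC⟩ ⊆ H ∩ C :=
      fun w hw => ⟨hchH hsucc (hbsub hw), hb1 x ⟨C, hC⟩ hw⟩
    exact closure_mono hsub' (hb3 x ⟨C, hC⟩)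
  -- points of the closure of H are κ-accessible from a single stage
  have hlimit : ∀ y ∈ closure H, ∃ o : Ordinal.{u}, o < Λ ∧ y ∈ clk κ (ch o) := by
    intro y hy
    have hyC : ∃ C ∈ 𝒞, y ∈ C := by
      have : y ∈ ⋃₀ 𝒞 := by rw [h𝒞cov]; trivial
      exact this
    obtain ⟨C, hC, hyC⟩ := hyC
    have hy2 : y ∈ closure (H ∩ C) := by
      have := closure_mono (hsat C hC) hy
      rwa [closure_closure] at this
    have hy3 : (⟨y, hyC⟩ : ↥C) ∈ closure (Subtype.val ⁻¹' (H ∩ C) : Set ↥C) := by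
      rw [closure_subtype]
      rw [Set.image_preimage_eq_inter_range, Subtype.range_coe]
      rwa [Set.inter_assoc, Set.inter_self]
    obtain ⟨B', hB'sub, hB'card, hB'cl⟩ := htight C hC _ ⟨y, hyC⟩ hy3
    have h1 : y ∈ closure (Subtype.val '' B') := by
      rw [closure_subtype] at hB'cl
      exact hB'cl
    have h2 : Subtype.val '' B' ⊆ H := by
      rintro w ⟨w', hw', rfl⟩
      exact (hB'sub hw').1
    have h3 : #(Subtype.val '' B') ≤ κ := le_trans Cardinal.mk_image_le hB'card
    obtain ⟨o, ho, hsub⟩ := hbound _ h2 h3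
    exact ⟨o, ho, mem_clk.2 ⟨Subtype.val '' B', ⟨hsub, h3⟩, h1⟩⟩
  -- the closure of H is everything
  have hcl : closure H = Set.univ := by
    by_contra hne
    have hex : ∃ q₀ : X, q₀ ∉ closure H := by
      by_contra hc
      push_neg at hc
      exact hne (Set.eq_univ_of_forall hc)
    obtain ⟨q₀, hq₀⟩ := hex
    have hsel : ∀ x : ↥(closure H), ∃ W, W ∈ V x.1 ∧ q₀ ∉ closure W := by
      intro x
      have hne' : q₀ ∉ ({x.1} : Set X) := by
        intro h
        rw [Set.mem_singleton_iff] at h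
        exact hq₀ (h ▸ x.2)
      rw [← hVsep x.1] at hne'
      simp only [Set.mem_iInter, not_forall] at hne'
      obtain ⟨W, hW, hq⟩ := hne'
      exact ⟨W, hW, hq⟩
    choose s hs1 hs2 using hsel
    have hopen : ∀ U ∈ insert (closure H)ᶜ (Set.range s), IsOpen U := by
      rintro U hU
      rcases Set.mem_insert_iff.1 hU with rfl | ⟨x, rfl⟩
      · exact isClosed_closure.isOpen_compl
      · exact (hVopen x.1 (s x) (hs1 x)).1
    have hcov' : ⋃₀ insert (closure H)ᶜ (Set.range s) = Set.univ := by
      apply Set.eq_univ_of_forall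
      intro z
      by_cases hz : z ∈ closure H
      · exact ⟨s ⟨z, hz⟩, Set.mem_insert_iff.2 (Or.inr ⟨⟨z, hz⟩, rfl⟩),
          (hVopen z (s ⟨z, hz⟩) (hs1 ⟨z, hz⟩)).2⟩
      · exact ⟨(closure H)ᶜ, Set.mem_insert _ _, hz⟩
    obtain ⟨𝒱', h𝒱'sub, h𝒱'card, h𝒱'cov⟩ := hL' _ hopen hcov'
    set 𝒱 : Set (Set X) := {W ∈ 𝒱' | ∃ x : ↥(closure H), W = s x} with h𝒱v
    have hclsub : closure H ⊆ ⋃₀ 𝒱 := by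
      intro z hz
      have hz' : z ∈ ⋃₀ 𝒱' := by rw [h𝒱'cov]; trivial
      obtain ⟨W, hW, hzW⟩ := hz'
      rcases Set.mem_insert_iff.1 (h𝒱'sub hW) with rfl | ⟨x, rfl⟩
      · exact absurd hz hzW
      · exact ⟨s x, ⟨hW, x, rfl⟩, hzW⟩
    have hq₀not : q₀ ∉ ⋃ W ∈ 𝒱, closure W := by
      intro hq
      obtain ⟨W, hW, hq'⟩ := Set.mem_iUnion₂.1 hq
      obtain ⟨x, rfl⟩ := hW.2
      exact hs2 x hq'
    have h𝒱card : #𝒱 ≤ κ :=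
      le_trans (mk_le_mk_of_subset (Set.sep_subset _ _)) h𝒱'card
    have hstage : ∀ W : ↥𝒱, ∃ o : Ordinal.{u}, o < Λ ∧ ∃ y ∈ clk κ (ch o), W.1 ∈ V y := by
      intro W
      obtain ⟨x, hx⟩ := W.2.2
      obtain ⟨o, ho, hyo⟩ := hlimit x.1 x.2
      exact ⟨o, ho, x.1, hyo, hx ▸ hs1 x⟩
    choose g hg1 hg2 using hstage
    have ho₁ : iSup g < Λ := by
      have hcof : #↥𝒱 < Λ.cof := by
        rw [hΛ, (Cardinal.isRegular_succ hκinf).cof_eq]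
        exact lt_of_le_of_lt h𝒱card (Order.lt_succ κ)
      exact Ordinal.iSup_lt_ord hcof hg1
    have h𝒱Fam : 𝒱 ∈ Fam (ch (iSup g)) := by
      refine ⟨?_, h𝒱card, ⟨q₀, hq₀not⟩⟩
      intro W hW
      obtain ⟨y, hy, hWy⟩ := hg2 ⟨W, hW⟩
      exact ⟨y, clk_mono (hchmono (Ordinal.le_iSup g ⟨W, hW⟩)) hy, hWy⟩
    have hqmem : q 𝒱 ∈ ch (Order.succ (iSup g)) := by
      have he : ch (Order.succ (iSup g)) =
          G (⋃ o'' : Set.Iio (Order.succ (iSup g)), ch o''.1) := stmt3chain_eq G _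
      rw [he, hG]
      refine Set.mem_union_right _ ⟨𝒱, ?_, rfl⟩
      refine hFamMono ?_ h𝒱Fam
      exact Set.subset_iUnion (fun o'' : Set.Iio (Order.succ (iSup g)) => ch o''.1)
        ⟨iSup g, Set.mem_Iio.2 (Order.lt_succ _)⟩
    have hqH : q 𝒱 ∈ H := hchH (hΛlim.succ_lt ho₁) hqmem
    have hq𝒱 := hqspec 𝒱 ⟨q₀, hq₀not⟩
    have hq2 : q 𝒱 ∈ ⋃₀ 𝒱 := hclsub (subset_closure hqH)
    obtain ⟨W, hW, hqW⟩ := hq2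
    exact hq𝒱 (Set.mem_iUnion₂.2 ⟨W, hW, subset_closure hqW⟩)
  -- conclude
  have hfinal : #(closure H) ≤ 2 ^ κ := by
    have hsub : closure H ⊆ ⋃ o' : Set.Iio Λ, clk κ (ch o'.1) := by
      intro y hy
      obtain ⟨o, ho, hy'⟩ := hlimit y hy
      exact Set.mem_iUnion.2 ⟨⟨o, ho⟩, hy'⟩
    refine le_trans (mk_le_mk_of_subset hsub) ?_
    rw [iUnion_Iio_eq_toType (fun o' => clk κ (ch o')) Λ]
    refine mk_iUnion_le_of_le h2κinf ?_ ?_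
    · rw [Cardinal.mk_toType, hΛ, Cardinal.card_ord]
      exact Order.succ_le_of_lt (cantor κ)
    · intro i
      exact card_clk_le hκinf (hchcard _ (((Ordinal.ToType.mk (o := Λ)).symm i).2)) hSap
  rw [hcl] at hfinal
  rwa [Cardinal.mk_univ] at hfinal
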